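/- For every fixed α with 0 < α < 1, the function ψ(α, λ) = e^{-αλ} · ∑_{k=0}^∞ (λ^k/k!)^α is strictly increasing as a function of λ on (0, +∞). -/

import Mathlib

open Real Finset

/-- A single term of the exponential series is at most `exp x`. -/
private lemma term_le_exp {x : ℝ} (hx : 0 ≤ x) (k : ℕ) :
    x ^ k / (Nat.factorial k : ℝ) ≤ Real.exp x := by
  calc x ^ k / (Nat.factorial k : ℝ)
      ≤ ∑ i ∈ Finset.range (k + 1), x ^ i / (Nat.factorial i : ℝ) := by
        apply Finset.single_le_sum (f := fun i => x ^ i / (Nat.factorial i : ℝ))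
        · intro i _; positivity
        · exact Finset.self_mem_range_succ k
    _ ≤ Real.exp x := Real.sum_le_exp_of_nonneg hx (k + 1)

private lemma summable_rpow_fact {α : ℝ} (hα : 0 < α) {l : ℝ} (hl : 0 ≤ l) :
    Summable fun k : ℕ => (l ^ k / (Nat.factorial k : ℝ)) ^ α := by
  have hhalf : (0:ℝ) ≤ (1/2 : ℝ) ^ α := Real.rpow_nonneg (by norm_num) α
  have hhalf1 : ((1/2 : ℝ)) ^ α < 1 :=
    Real.rpow_lt_one (by norm_num) (by norm_num) hα
  refine Summable.of_nonneg_of_le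
    (f := fun k : ℕ => Real.exp (2 * l) ^ α * (((1/2 : ℝ) ^ α) ^ k))
    (fun k => Real.rpow_nonneg (x := l ^ k / (Nat.factorial k : ℝ)) (by positivity) α) (fun k => ?_)
    ((summable_geometric_of_lt_one hhalf hhalf1).mul_left _)
  · 
    have hb : l ^ k / (Nat.factorial k : ℝ) ≤ Real.exp (2 * l) * (1/2 : ℝ) ^ k := by
      have h1 : (2 * l) ^ k / (Nat.factorial k : ℝ) ≤ Real.exp (2 * l) :=
        term_le_exp (by linarith) k
      have h2 : l ^ k = (2 * l) ^ k * (1/2 : ℝ) ^ k := by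
        rw [← mul_pow]; ring_nf
      rw [h2]
      calc (2 * l) ^ k * (1 / 2 : ℝ) ^ k / (Nat.factorial k : ℝ)
          = ((2 * l) ^ k / (Nat.factorial k : ℝ)) * (1/2 : ℝ) ^ k := by ring
        _ ≤ Real.exp (2 * l) * (1/2 : ℝ) ^ k := by
            apply mul_le_mul_of_nonneg_right h1 (by positivity)
    calc (l ^ k / (Nat.factorial k : ℝ)) ^ α
        ≤ (Real.exp (2 * l) * (1/2 : ℝ) ^ k) ^ α :=
          Real.rpow_le_rpow (by positivity) hb hα.le
      _ = Real.exp (2 * l) ^ α * (((1/2 : ℝ) ^ k : ℝ)) ^ α :=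
          Real.mul_rpow (Real.exp_pos _).le (by positivity)
      _ = Real.exp (2 * l) ^ α * (((1/2 : ℝ) ^ α) ^ k) := by
          rw [← Real.rpow_natCast ((1/2 : ℝ)) k, ← Real.rpow_mul (by norm_num),
            mul_comm (k : ℝ) α, Real.rpow_mul (by norm_num), Real.rpow_natCast]

/-- Finite Hölder-type inequality. -/
private lemma holder_aux {ι : Type*} (t : Finset ι) (u v : ι → ℝ)
    (hu : ∀ i ∈ t, 0 ≤ u i) (hv : ∀ i ∈ t, 0 ≤ v i)
    {α : ℝ} (hα : 0 < α) (hα1 : α < 1) :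
    ∑ i ∈ t, u i ^ α * v i ^ (1 - α) ≤
      (∑ i ∈ t, u i) ^ α * (∑ i ∈ t, v i) ^ (1 - α) := by
  set U := ∑ i ∈ t, u i with hU
  set V := ∑ i ∈ t, v i with hV
  have hUnn : 0 ≤ U := Finset.sum_nonneg hu
  have hVnn : 0 ≤ V := Finset.sum_nonneg hv
  rcases eq_or_lt_of_le hUnn with hU0 | hUpos
  · have : ∀ i ∈ t, u i = 0 := by
      intro i hi
      exact (Finset.sum_eq_zero_iff_of_nonneg hu).1 hU0.symm i hi
    have hL : ∑ i ∈ t, u i ^ α * v i ^ (1 - α) = 0 := by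
      apply Finset.sum_eq_zero
      intro i hi
      rw [this i hi, Real.zero_rpow hα.ne', zero_mul]
    rw [hL, ← hU0, Real.zero_rpow hα.ne', zero_mul]
  rcases eq_or_lt_of_le hVnn with hV0 | hVpos
  · have : ∀ i ∈ t, v i = 0 := by
      intro i hi
      exact (Finset.sum_eq_zero_iff_of_nonneg hv).1 hV0.symm i hi
    have hL : ∑ i ∈ t, u i ^ α * v i ^ (1 - α) = 0 := by
      apply Finset.sum_eq_zero
      intro i hi
      rw [this i hi, Real.zero_rpow (by linarith), mul_zero]
    rw [hL, ← hV0, Real.zero_rpow (by linarith), mul_zero]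
  have key : ∀ i ∈ t, u i ^ α * v i ^ (1 - α) ≤
      U ^ α * V ^ (1 - α) * (α * (u i / U) + (1 - α) * (v i / V)) := by
    intro i hi
    have h2 := Real.geom_mean_le_arith_mean2_weighted (w₁ := α) (w₂ := 1 - α)
      (p₁ := u i / U) (p₂ := v i / V) hα.le (by linarith)
      (div_nonneg (hu i hi) hUnn) (div_nonneg (hv i hi) hVnn) (by ring)
    have e1 : (u i / U) ^ α = u i ^ α / U ^ α := Real.div_rpow (hu i hi) hUnn α
    have e2 : (v i / V) ^ (1 - α) = v i ^ (1 - α) / V ^ (1 - α) :=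
      Real.div_rpow (hv i hi) hVnn (1 - α)
    have hUa : (0:ℝ) < U ^ α := Real.rpow_pos_of_pos hUpos α
    have hVa : (0:ℝ) < V ^ (1 - α) := Real.rpow_pos_of_pos hVpos (1 - α)
    calc u i ^ α * v i ^ (1 - α)
        = U ^ α * V ^ (1 - α) * ((u i / U) ^ α * (v i / V) ^ (1 - α)) := by
          rw [e1, e2]; field_simp
      _ ≤ U ^ α * V ^ (1 - α) * (α * (u i / U) + (1 - α) * (v i / V)) := by
          apply mul_le_mul_of_nonneg_left h2 (by positivity)
  calc ∑ i ∈ t, u i ^ α * v i ^ (1 - α)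
      ≤ ∑ i ∈ t, U ^ α * V ^ (1 - α) * (α * (u i / U) + (1 - α) * (v i / V)) :=
        Finset.sum_le_sum key
    _ = U ^ α * V ^ (1 - α) := by
        rw [← Finset.mul_sum, Finset.sum_add_distrib]
        have h1 : ∑ i ∈ t, α * (u i / U) = α := by
          rw [← Finset.mul_sum, ← Finset.sum_div, ← hU, div_self hUpos.ne', mul_one]
        have h2 : ∑ i ∈ t, (1 - α) * (v i / V) = 1 - α := by
          rw [← Finset.mul_sum, ← Finset.sum_div, ← hV, div_self hVpos.ne', mul_one]
        rw [h1, h2]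
        ring

private lemma binom_aux (x z : ℝ) (n : ℕ) :
    ∑ kl ∈ antidiagonal n,
      (x ^ kl.1 / (Nat.factorial kl.1 : ℝ)) * (z ^ kl.2 / (Nat.factorial kl.2 : ℝ)) =
      (x + z) ^ n / (Nat.factorial n : ℝ) := by
  rw [Finset.Nat.sum_antidiagonal_eq_sum_range_succ_mk, add_pow, Finset.sum_div]
  refine Finset.sum_congr rfl fun i hi => ?_
  have hi' : i ≤ n := Nat.lt_succ_iff.mp (Finset.mem_range.mp hi)
  rw [Nat.cast_choose ℝ hi']
  have h1 : (Nat.factorial i : ℝ) ≠ 0 := Nat.cast_ne_zero.2 (Nat.factorial_ne_zero i)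
  have h2 : (Nat.factorial (n - i) : ℝ) ≠ 0 := Nat.cast_ne_zero.2 (Nat.factorial_ne_zero _)
  have h3 : (Nat.factorial n : ℝ) ≠ 0 := Nat.cast_ne_zero.2 (Nat.factorial_ne_zero n)
  field_simp
open Real Finset in
private lemma pois_conv (x z : ℝ) (n : ℕ) :
    ∑ kl ∈ antidiagonal n,
      (Real.exp (-x) * (x ^ kl.1 / (Nat.factorial kl.1 : ℝ))) *
      (Real.exp (-z) * (z ^ kl.2 / (Nat.factorial kl.2 : ℝ))) =
      Real.exp (-(x + z)) * ((x + z) ^ n / (Nat.factorial n : ℝ)) := by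
  have h : ∀ kl : ℕ × ℕ,
      (Real.exp (-x) * (x ^ kl.1 / (Nat.factorial kl.1 : ℝ))) *
      (Real.exp (-z) * (z ^ kl.2 / (Nat.factorial kl.2 : ℝ))) =
      Real.exp (-(x + z)) *
        ((x ^ kl.1 / (Nat.factorial kl.1 : ℝ)) * (z ^ kl.2 / (Nat.factorial kl.2 : ℝ))) := by
    intro kl
    rw [show -(x + z) = -x + -z by ring, Real.exp_add]
    ring
  rw [Finset.sum_congr rfl fun kl _ => h kl, ← Finset.mul_sum, binom_aux]

private lemma tsum_pois (l : ℝ) :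
    ∑' k : ℕ, Real.exp (-l) * (l ^ k / (Nat.factorial k : ℝ)) = 1 := by
  rw [tsum_mul_left]
  have h : ∑' k : ℕ, l ^ k / (Nat.factorial k : ℝ) = Real.exp l := by
    rw [Real.exp_eq_exp_ℝ, NormedSpace.exp_eq_tsum_div]
  rw [h, Real.exp_neg, inv_mul_cancel₀ (Real.exp_pos l).ne']

open Finset in
private lemma main_aux {α x z : ℝ} (hα : 0 < α) (hα1 : α < 1) (hx : 0 < x) (hz : 0 < z) :
    ∑' k : ℕ, (Real.exp (-x) * (x ^ k / (Nat.factorial k : ℝ))) ^ α <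
    ∑' k : ℕ, (Real.exp (-(x + z)) * ((x + z) ^ k / (Nat.factorial k : ℝ))) ^ α := by
  set p : ℕ → ℝ := fun i => Real.exp (-x) * (x ^ i / (Nat.factorial i : ℝ)) with hp
  set r : ℕ → ℝ := fun j => Real.exp (-z) * (z ^ j / (Nat.factorial j : ℝ)) with hr
  set q : ℕ → ℝ := fun k => Real.exp (-(x + z)) * ((x + z) ^ k / (Nat.factorial k : ℝ)) with hq
  have hppos : ∀ i, 0 < p i := fun i =>
    mul_pos (Real.exp_pos _) (div_pos (pow_pos hx i) (by positivity))
  have hrpos : ∀ j, 0 < r j := fun j =>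
    mul_pos (Real.exp_pos _) (div_pos (pow_pos hz j) (by positivity))
  have hqpos : ∀ k, 0 < q k := fun k =>
    mul_pos (Real.exp_pos _) (div_pos (pow_pos (by linarith) k) (by positivity))
  -- summability
  have hSpα : Summable fun k => p k ^ α := by
    refine ((summable_rpow_fact hα hx.le).mul_left (Real.exp (-x) ^ α)).congr fun k => ?_
    rw [← Real.mul_rpow (Real.exp_pos _).le (by positivity)]
  have hSqα : Summable fun k => q k ^ α := by
    refine ((summable_rpow_fact hα (by linarith : (0:ℝ) ≤ x + z)).mul_left
      (Real.exp (-(x + z)) ^ α)).congr fun k => ?_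
    rw [← Real.mul_rpow (Real.exp_pos _).le (by positivity)]
  have hSr : Summable r := (Real.summable_pow_div_factorial z).mul_left _
  have hr1 : ∑' j, r j = 1 := tsum_pois z
  -- convolution identity
  have hconv : ∀ n, ∑ kl ∈ antidiagonal n, p kl.1 * r kl.2 = q n := fun n => pois_conv x z n
  -- partial sums of r are at most 1
  have hrsum_le : ∀ n : ℕ, ∑ kl ∈ antidiagonal n, r kl.2 ≤ 1 := by
    intro n
    rw [Finset.Nat.sum_antidiagonal_eq_sum_range_succ_mk]
    have hrefl : ∑ i ∈ Finset.range (n + 1), r (n - i) = ∑ i ∈ Finset.range (n + 1), r i :=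
      Finset.sum_range_reflect r (n + 1)
    rw [hrefl, ← hr1]
    exact Summable.sum_le_tsum (Finset.range (n + 1)) (fun j _ => (hrpos j).le) hSr
  -- Hölder step
  have hstep : ∀ n, (∑ kl ∈ antidiagonal n, p kl.1 ^ α * r kl.2) ≤ q n ^ α := by
    intro n
    have h1 : ∀ kl ∈ antidiagonal n, p kl.1 ^ α * r kl.2
        = (p kl.1 * r kl.2) ^ α * (r kl.2) ^ (1 - α) := by
      intro kl _
      rw [Real.mul_rpow (hppos kl.1).le (hrpos kl.2).le, mul_assoc,
        ← Real.rpow_add (hrpos kl.2), show α + (1 - α) = 1 by ring, Real.rpow_one]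
    calc (∑ kl ∈ antidiagonal n, p kl.1 ^ α * r kl.2)
        = ∑ kl ∈ antidiagonal n, (p kl.1 * r kl.2) ^ α * (r kl.2) ^ (1 - α) :=
          Finset.sum_congr rfl h1
      _ ≤ (∑ kl ∈ antidiagonal n, p kl.1 * r kl.2) ^ α *
            (∑ kl ∈ antidiagonal n, r kl.2) ^ (1 - α) :=
          holder_aux _ _ _ (fun kl _ => (mul_pos (hppos _) (hrpos _)).le)
            (fun kl _ => (hrpos _).le) hα hα1
      _ ≤ q n ^ α * 1 := by
          rw [hconv n]
          apply mul_le_mul_of_nonneg_left _ (Real.rpow_pos_of_pos (hqpos n) α).le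
          exact Real.rpow_le_one (Finset.sum_nonneg fun kl _ => (hrpos _).le)
            (hrsum_le n) (by linarith)
      _ = q n ^ α := mul_one _
  -- strict inequality at n = 0
  have hstrict : (∑ kl ∈ antidiagonal 0, p kl.1 ^ α * r kl.2) < q 0 ^ α := by
    rw [Finset.Nat.antidiagonal_zero, Finset.sum_singleton]
    have hq0 : q 0 = p 0 * r 0 := ((pois_conv x z 0).symm.trans (by
      rw [Finset.Nat.antidiagonal_zero, Finset.sum_singleton]))
    rw [hq0, Real.mul_rpow (hppos 0).le (hrpos 0).le]
    apply mul_lt_mul_of_pos_left _ (Real.rpow_pos_of_pos (hppos 0) α)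
    have h01 : r 0 < 1 := by
      have : r 0 = Real.exp (-z) := by simp [hr]
      rw [this]
      exact Real.exp_lt_one_iff.mpr (by linarith)
    calc r 0 = r 0 ^ (1 : ℝ) := (Real.rpow_one _).symm
      _ < r 0 ^ α := Real.rpow_lt_rpow_of_exponent_gt (hrpos 0) h01 hα1
  -- assemble
  calc ∑' k, p k ^ α = (∑' k, p k ^ α) * ∑' j, r j := by rw [hr1, mul_one]
    _ = ∑' n, ∑ kl ∈ antidiagonal n, p kl.1 ^ α * r kl.2 :=
        tsum_mul_tsum_eq_tsum_sum_antidiagonal_of_summable_norm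
          (hSpα.congr fun k =>
            (Real.norm_of_nonneg (Real.rpow_nonneg (hppos k).le α)).symm)
          (hSr.congr fun j => (Real.norm_of_nonneg (hrpos j).le).symm)
    _ < ∑' k, q k ^ α :=
        Summable.tsum_lt_tsum_of_nonneg
          (fun n => Finset.sum_nonneg fun kl _ =>
            mul_nonneg (Real.rpow_nonneg (hppos _).le α) (hrpos _).le)
          hstep hstrict hSqα

/-- For every fixed `0 < α < 1`, the function `ψ(α,λ) = e^{-αλ} ∑_{k=0}^∞ (λ^k/k!)^α`
is strictly increasing in `λ` on `(0, ∞)`. -/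
theorem psi_strictMonoOn_of_alpha_lt_one (α : ℝ) (hα : 0 < α) (hα1 : α < 1) :
    StrictMonoOn (fun l : ℝ =>
      Real.exp (-α * l) * ∑' k : ℕ, (l ^ k / (Nat.factorial k : ℝ)) ^ α)
      (Set.Ioi (0 : ℝ)) := by
  intro x hx y hy hxy
  simp only [Set.mem_Ioi] at hx hy
  have key : ∀ l : ℝ, 0 ≤ l →
      Real.exp (-α * l) * ∑' k : ℕ, (l ^ k / (Nat.factorial k : ℝ)) ^ α
      = ∑' k : ℕ, (Real.exp (-l) * (l ^ k / (Nat.factorial k : ℝ))) ^ α := by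
    intro l hl
    rw [show -α * l = -l * α by ring, Real.exp_mul, ← tsum_mul_left]
    refine tsum_congr fun k => ?_
    rw [Real.mul_rpow (Real.exp_pos _).le (by positivity)]
  dsimp only
  rw [key x hx.le, key y hy.le]
  have hz : 0 < y - x := by linarith
  have h := main_aux hα hα1 hx hz
  rw [show x + (y - x) = y by ring] at h
  exact h
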